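/- Let G be a finite simple graph with a nonempty vertex set V, and for a nonempty vertex set S let ρ(S) = 2·e(S)/|S| be the average degree of the subgraph induced by S. Let δ > 0, and consider the greedy peeling sequence V = S₀ ⊋ S₁ ⊋ ⋯ ⊋ S_{|V|-1}, where each S_{j+1} is obtained from S_j by removing a vertex of minimum degree in the subgraph induced by S_j. If ρ(S_j) < δ/2 for every index j in the peeling sequence, then ρ(S) < δ for every nonempty vertex subset S ⊆ V; that is, G contains no induced subgraph of density at least δ. -/

import Mathlib

open Finset

/-- Twice the number of edges of `G` with both endpoints in `S`,
i.e. the number of *ordered* adjacent pairs inside `S`. -/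
def twiceEdgeCount {V : Type*} [DecidableEq V] (G : SimpleGraph V)
    [DecidableRel G.Adj] (S : Finset V) : ℕ :=
  ((S ×ˢ S).filter fun p => G.Adj p.1 p.2).card

/-- The density `ρ(S) = 2·e(S)/|S|` of the subgraph of `G` induced by `S`:
the average degree of the induced subgraph. -/
noncomputable def density {V : Type*} [DecidableEq V] (G : SimpleGraph V)
    [DecidableRel G.Adj] (S : Finset V) : ℝ :=
  (twiceEdgeCount G S : ℝ) / (S.card : ℝ)

/-- The degree of `v` in the subgraph of `G` induced by `S`. -/
def inducedDegree {V : Type*} [DecidableEq V] (G : SimpleGraph V)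
    [DecidableRel G.Adj] (S : Finset V) (v : V) : ℕ :=
  (S.filter fun u => G.Adj v u).card

lemma twiceEdgeCount_eq_sum {V : Type*} [DecidableEq V] (G : SimpleGraph V)
    [DecidableRel G.Adj] (S : Finset V) :
    twiceEdgeCount G S = ∑ v ∈ S, inducedDegree G S v := by
  rw [twiceEdgeCount, Finset.card_filter, Finset.sum_product]
  congr 1
  ext v
  rw [inducedDegree, Finset.card_filter]

lemma inducedDegree_mono {V : Type*} [DecidableEq V] (G : SimpleGraph V)
    [DecidableRel G.Adj] {A B : Finset V} (h : A ⊆ B) (v : V) :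
    inducedDegree G A v ≤ inducedDegree G B v :=
  Finset.card_le_card (Finset.filter_subset_filter _ h)

lemma inducedDegree_erase {V : Type*} [DecidableEq V] (G : SimpleGraph V)
    [DecidableRel G.Adj] {A : Finset V} {u : V} (hu : u ∈ A) (v : V) :
    inducedDegree G A v
      = inducedDegree G (A.erase u) v + (if G.Adj v u then 1 else 0) := by
  unfold inducedDegree
  conv_lhs => rw [← Finset.insert_erase hu]
  rw [Finset.filter_insert]
  split_ifs with h
  · rw [Finset.card_insert_of_notMem, add_comm]
    intro hmem
    exact (Finset.notMem_erase u A) (Finset.mem_of_mem_filter u hmem)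
  · rw [add_zero]

lemma twiceEdgeCount_erase {V : Type*} [DecidableEq V] (G : SimpleGraph V)
    [DecidableRel G.Adj] {A : Finset V} {u : V} (hu : u ∈ A) :
    twiceEdgeCount G A = twiceEdgeCount G (A.erase u) + 2 * inducedDegree G A u := by
  have hdegu : inducedDegree G (A.erase u) u = inducedDegree G A u := by
    rw [inducedDegree_erase G hu u, if_neg (G.irrefl), add_zero]
  have hcount : ∑ v ∈ A, (if G.Adj v u then 1 else 0) = inducedDegree G A u := by
    rw [← Finset.card_filter, inducedDegree]
    congr 1
    ext v
    simp only [Finset.mem_filter]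
    exact and_congr_right fun _ => ⟨fun h => h.symm, fun h => h.symm⟩
  rw [twiceEdgeCount_eq_sum]
  calc ∑ v ∈ A, inducedDegree G A v
      = ∑ v ∈ A, (inducedDegree G (A.erase u) v + (if G.Adj v u then 1 else 0)) :=
        Finset.sum_congr rfl fun v _ => inducedDegree_erase G hu v
    _ = ∑ v ∈ A, inducedDegree G (A.erase u) v + inducedDegree G A u := by
        rw [Finset.sum_add_distrib, hcount]
    _ = (inducedDegree G (A.erase u) u + ∑ v ∈ A.erase u, inducedDegree G (A.erase u) v)
          + inducedDegree G A u := by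
        rw [Finset.add_sum_erase _ _ hu]
    _ = twiceEdgeCount G (A.erase u) + 2 * inducedDegree G A u := by
        rw [hdegu, twiceEdgeCount_eq_sum]; ring

/-- The minimum induced degree is at most the density. -/
lemma min_degree_le_density {V : Type*} [DecidableEq V] (G : SimpleGraph V)
    [DecidableRel G.Adj] {T : Finset V} {v : V} (hv : v ∈ T)
    (hmin : ∀ u ∈ T, inducedDegree G T v ≤ inducedDegree G T u) :
    (inducedDegree G T v : ℝ) ≤ density G T := by
  have hTpos : (0 : ℝ) < (T.card : ℝ) := by
    exact_mod_cast Finset.card_pos.mpr ⟨v, hv⟩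
  have hsum : T.card * inducedDegree G T v ≤ twiceEdgeCount G T := by
    rw [twiceEdgeCount_eq_sum]
    calc T.card * inducedDegree G T v = ∑ _u ∈ T, inducedDegree G T v := by
          rw [Finset.sum_const, smul_eq_mul]
      _ ≤ ∑ u ∈ T, inducedDegree G T u := Finset.sum_le_sum fun u hu => hmin u hu
  rw [density, le_div_iff₀ hTpos]
  calc (inducedDegree G T v : ℝ) * (T.card : ℝ)
      = ((T.card * inducedDegree G T v : ℕ) : ℝ) := by push_cast; ring
    _ ≤ (twiceEdgeCount G T : ℝ) := by exact_mod_cast hsum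

/-- Let `δ > 0` and consider the greedy peeling sequence `S 0 = V`, where each
`S (j+1)` (for `j + 1 ≤ |V| - 1`) is obtained from `S j` by removing a vertex
of minimum degree in the subgraph induced by `S j`.  If `ρ(S j) < δ/2` for
every index `j ≤ |V| - 1` of the peeling sequence, then `ρ(A) < δ` for every
nonempty vertex subset `A`; that is, `G` contains no induced subgraph of
density at least `δ`. -/
theorem greedy_peeling_prune
    {V : Type*} [Fintype V] [DecidableEq V] [Nonempty V]
    (G : SimpleGraph V) [DecidableRel G.Adj]
    (δ : ℝ) (hδ : 0 < δ)
    (S : ℕ → Finset V)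
    (h0 : S 0 = Finset.univ)
    (hstep : ∀ j, j + 1 ≤ Fintype.card V - 1 →
      ∃ v ∈ S j,
        (∀ u ∈ S j, inducedDegree G (S j) v ≤ inducedDegree G (S j) u) ∧
        S (j + 1) = (S j).erase v)
    (hsmall : ∀ j ≤ Fintype.card V - 1, density G (S j) < δ / 2)
    (A : Finset V) (hA : A.Nonempty) :
    density G A < δ := by
  have hN1 : 1 ≤ Fintype.card V := Fintype.card_pos
  suffices H : ∀ n (A : Finset V), A.card ≤ n → A.Nonempty → density G A < δ from
    H A.card A le_rfl hA
  intro n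
  induction n with
  | zero =>
    intro A hcard hA
    exact absurd (Finset.card_eq_zero.mp (Nat.le_zero.mp hcard))
      (Finset.nonempty_iff_ne_empty.mp hA)
  | succ n ih =>
    intro A hcard hA
    by_contra hge
    push_neg at hge
    have hApos : (0 : ℝ) < (A.card : ℝ) := by
      exact_mod_cast Finset.card_pos.mpr hA
    have htA : δ * (A.card : ℝ) ≤ (twiceEdgeCount G A : ℝ) := by
      rw [density, le_div_iff₀ hApos] at hge
      linarith
    -- A has at least two elements
    have hA2 : 2 ≤ A.card := by
      by_contra h2
      push_neg at h2
      have h1 : A.card = 1 := by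
        have := Finset.card_pos.mpr hA
        omega
      obtain ⟨a, ha⟩ := Finset.card_eq_one.mp h1
      have hz : twiceEdgeCount G A = 0 := by
        rw [twiceEdgeCount_eq_sum, ha]
        simp only [Finset.sum_singleton, inducedDegree]
        rw [Finset.filter_singleton, if_neg (G.loopless.irrefl a), Finset.card_empty]
      rw [hz, h1] at htA
      simp at htA
      linarith
    -- every vertex of A has induced degree at least δ/2
    have hmin : ∀ u ∈ A, δ / 2 ≤ (inducedDegree G A u : ℝ) := by
      intro u hu
      by_contra hlt
      push_neg at hlt
      have hBcard : (A.erase u).card = A.card - 1 := Finset.card_erase_of_mem hu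
      have hBne : (A.erase u).Nonempty := by
        rw [← Finset.card_pos, hBcard]; omega
      have hBlt : density G (A.erase u) < δ := ih _ (by omega) hBne
      have hBpos : (0 : ℝ) < ((A.erase u).card : ℝ) := by
        exact_mod_cast Finset.card_pos.mpr hBne
      have hBcardR : ((A.erase u).card : ℝ) = (A.card : ℝ) - 1 := by
        rw [hBcard]
        have h1 : 1 ≤ A.card := by omega
        push_cast [h1]
        ring
      have hsplit : (twiceEdgeCount G A : ℝ)
          = (twiceEdgeCount G (A.erase u) : ℝ) + 2 * (inducedDegree G A u : ℝ) := by
        exact_mod_cast congrArg (Nat.cast : ℕ → ℝ) (twiceEdgeCount_erase G hu)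
      have hBbig : δ ≤ density G (A.erase u) := by
        rw [density, le_div_iff₀ hBpos, hBcardR]
        nlinarith
      linarith
    -- peel: A survives in every S j, but the last S j has one element
    have claim : ∀ k j, j + k = Fintype.card V - 1 →
        (S j).card = Fintype.card V - j → A ⊆ S j → False := by
      intro k
      induction k with
      | zero =>
        intro j hjk hcardj hsub
        have : (S j).card = 1 := by omega
        have := Finset.card_le_card hsub
        omega
      | succ k ihk =>
        intro j hjk hcardj hsub
        obtain ⟨v, hv, hvmin, hSv⟩ := hstep j (by omega)
        by_cases hvA : v ∈ A
        · have h1 : (inducedDegree G (S j) v : ℝ) ≤ density G (S j) :=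
            min_degree_le_density G hv hvmin
          have h2 : density G (S j) < δ / 2 := hsmall j (by omega)
          have h3 : (inducedDegree G A v : ℝ) ≤ (inducedDegree G (S j) v : ℝ) := by
            exact_mod_cast inducedDegree_mono G hsub v
          have h4 : δ / 2 ≤ (inducedDegree G A v : ℝ) := hmin v hvA
          linarith
        · apply ihk (j + 1) (by omega)
          · rw [hSv, Finset.card_erase_of_mem hv]
            omega
          · rw [hSv]
            intro x hx
            exact Finset.mem_erase.mpr ⟨fun he => hvA (he ▸ hx), hsub hx⟩
    exact claim (Fintype.card V - 1) 0 (by omega)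
      (by rw [h0]; simp) (h0 ▸ Finset.subset_univ A)
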